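/- Let I = (u_1,…,u_m) be a monomial ideal in S = K[x_1,…,x_n] and u a monomial of S; let I^p and u^p be their polarizations in T, and let π : T → S be the specialization map. Then I : u is a prime ideal of S if and only if I^p : u^p is a prime ideal of T, and in this case I : u = π(I^p : u^p). -/

import Mathlib

open MvPolynomial

/-- The monomial `x^a` in `K[x_i : i ∈ σ]`. -/
noncomputable def mono (K : Type*) [Field K] {σ : Type*} (a : σ →₀ ℕ) :
    MvPolynomial σ K :=
  MvPolynomial.monomial a 1

/-- An ideal is a monomial ideal if it is generated by monomials. -/
def IsMonomialIdeal {K : Type*} [Field K] {σ : Type*}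
    (I : Ideal (MvPolynomial σ K)) : Prop :=
  ∃ A : Set (σ →₀ ℕ), I = Ideal.span ((fun a => mono K a) '' A)

/-- The exponent vector of the polarization `u^p = ∏ᵢ ∏_{j<aᵢ} x_{ij}` of the
monomial `u = ∏ᵢ xᵢ^{aᵢ}`: the squarefree exponent supported on
`{(i,j) : j < a i}`, in the variables of `T = K[x_{ij}]`. -/
noncomputable def polarExp {n : ℕ} (a : Fin n →₀ ℕ) : (Fin n × ℕ) →₀ ℕ :=
  Finsupp.indicator
    (a.support.biUnion fun i => (Finset.range (a i)).image fun j => (i, j))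
    (fun _ _ => 1)

/-- The polarization `I^p ⊂ T = K[x_{ij}]` of a monomial ideal `I ⊂ S`: the
ideal generated by the polarizations of the monomials of `I` (for a monomial
ideal this is the ideal generated by the polarizations of any set of monomial
generators). -/
noncomputable def polarIdeal {K : Type*} [Field K] {n : ℕ}
    (I : Ideal (MvPolynomial (Fin n) K)) : Ideal (MvPolynomial (Fin n × ℕ) K) :=
  Ideal.span ((fun a => mono K (polarExp a)) '' {a : Fin n →₀ ℕ | mono K a ∈ I})

section Aux

variable {K : Type*} [Field K] {σ : Type*}

lemma mono_mul (a b : σ →₀ ℕ) : (mono K a) * mono K b = mono K (a + b) := by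
  simp [mono, monomial_mul]

lemma X_eq_mono (i : σ) : (X i : MvPolynomial σ K) = mono K (Finsupp.single i 1) := rfl

lemma support_mul_mono (a : σ →₀ ℕ) (p : MvPolynomial σ K) :
    (p * mono K a).support = p.support.map (addRightEmbedding a) :=
  AddMonoidAlgebra.support_coeff_mul_single p 1 (by simp) a

lemma mem_span_mono {A : Set (σ →₀ ℕ)} {p : MvPolynomial σ K} :
    p ∈ Ideal.span (mono K '' A) ↔ ∀ c ∈ p.support, ∃ b ∈ A, b ≤ c :=
  mem_ideal_span_monomial_image

lemma mono_mem_span {A : Set (σ →₀ ℕ)} {c : σ →₀ ℕ} :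
    mono K c ∈ Ideal.span (mono K '' A) ↔ ∃ b ∈ A, b ≤ c := by
  classical
  rw [mem_span_mono]
  have hs : (mono K c : MvPolynomial σ K).support = {c} := by
    rw [mono, support_monomial, if_neg one_ne_zero]
  simp [hs]

/-- A set of exponents is upward closed. -/
def UpClosed {σ : Type*} (A : Set (σ →₀ ℕ)) : Prop := ∀ ⦃c c'⦄, c ∈ A → c ≤ c' → c' ∈ A

lemma exists_le_iff {A : Set (σ →₀ ℕ)} (hA : UpClosed A) (c : σ →₀ ℕ) :
    (∃ b ∈ A, b ≤ c) ↔ c ∈ A :=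
  ⟨fun ⟨b, hb, h⟩ => hA hb h, fun h => ⟨c, h, le_rfl⟩⟩

lemma colon_span (A : Set (σ →₀ ℕ)) (a : σ →₀ ℕ) :
    (Ideal.span (mono K '' A)).colon (Ideal.span {mono K a}) =
      Ideal.span (mono K '' {c | ∃ b ∈ A, b ≤ a + c}) := by
  ext p
  rw [Ideal.mem_colon_span_singleton, mem_span_mono, mem_span_mono, support_mul_mono]
  constructor
  · intro h c hc
    refine ⟨c, ?_, le_rfl⟩
    obtain ⟨b, hb, hble⟩ := h (c + a) (Finset.mem_map.mpr ⟨c, hc, rfl⟩)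
    exact ⟨b, hb, by rwa [add_comm]⟩
  · intro h d hd
    obtain ⟨c, hc, rfl⟩ := Finset.mem_map.mp hd
    obtain ⟨s, ⟨b, hb, hble⟩, hsc⟩ := h c hc
    refine ⟨b, hb, hble.trans ?_⟩
    show a + s ≤ addRightEmbedding a c
    rw [addRightEmbedding_apply, add_comm c a]
    exact add_le_add_right hsc a

lemma span_X_isPrime (V : Set σ) :
    (Ideal.span ((fun i => (X i : MvPolynomial σ K)) '' V)).IsPrime := by
  classical
  set f : σ → MvPolynomial σ K := fun i => if i ∈ V then 0 else X i with hf
  have key : ∀ p : MvPolynomial σ K,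
      p - aeval f p ∈ Ideal.span ((fun i => (X i : MvPolynomial σ K)) '' V) := by
    intro p
    induction p using MvPolynomial.induction_on with
    | C a => simp
    | add p q hp hq =>
        have := Ideal.add_mem _ hp hq
        convert this using 1
        rw [map_add]; ring
    | mul_X p i hp =>
        rw [map_mul, aeval_X]
        by_cases hi : i ∈ V
        · have hX : (X i : MvPolynomial σ K) ∈
              Ideal.span ((fun i => (X i : MvPolynomial σ K)) '' V) :=
            Ideal.subset_span ⟨i, hi, rfl⟩
          rw [hf]; simp only [if_pos hi, mul_zero, sub_zero]
          exact Ideal.mul_mem_left _ _ hX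
        · rw [hf]; simp only [if_neg hi]
          have := Ideal.mul_mem_right (X i) _ hp
          convert this using 1
          ring
  have hker : Ideal.span ((fun i => (X i : MvPolynomial σ K)) '' V)
      = RingHom.ker (aeval f : MvPolynomial σ K →ₐ[K] MvPolynomial σ K).toRingHom := by
    apply le_antisymm
    · rw [Ideal.span_le]
      rintro _ ⟨i, hi, rfl⟩
      simp only [SetLike.mem_coe, RingHom.mem_ker, AlgHom.toRingHom_eq_coe, RingHom.coe_coe,
        aeval_X]
      rw [hf]; simp [if_pos hi]
    · intro p hp
      have hp0 : aeval f p = 0 := hp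
      have := key p
      rwa [hp0, sub_zero] at this
  rw [hker]
  exact RingHom.ker_isPrime _

lemma span_eq_spanX {A : Set (σ →₀ ℕ)}
    (hvar : ∀ c ∈ A, ∃ i ∈ c.support, Finsupp.single i 1 ∈ A) :
    Ideal.span (mono K '' A) =
      Ideal.span ((fun i => (X i : MvPolynomial σ K)) '' {i | Finsupp.single i 1 ∈ A}) := by
  apply le_antisymm
  · rw [Ideal.span_le]
    rintro _ ⟨c, hc, rfl⟩
    obtain ⟨i, hi, hsi⟩ := hvar c hc
    have hle : Finsupp.single i 1 ≤ c :=
      Finsupp.single_le_iff.mpr (Nat.one_le_iff_ne_zero.mpr (Finsupp.mem_support_iff.mp hi))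
    have : mono K c = mono K (c - Finsupp.single i 1) * X i := by
      rw [X_eq_mono, mono_mul, tsub_add_cancel_of_le hle]
    rw [this]
    exact Ideal.mul_mem_left _ _ (Ideal.subset_span ⟨i, hsi, rfl⟩)
  · rw [Ideal.span_le]
    rintro _ ⟨i, hi, rfl⟩
    exact Ideal.subset_span ⟨Finsupp.single i 1, hi, rfl⟩

lemma prime_iff {A : Set (σ →₀ ℕ)} (hA : UpClosed A) :
    (Ideal.span (mono K '' A)).IsPrime ↔
      (0 ∉ A ∧ ∀ c ∈ A, ∃ i ∈ c.support, Finsupp.single i 1 ∈ A) := by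
  constructor
  · intro h
    have h0 : (0 : σ →₀ ℕ) ∉ A := by
      intro h0
      have h1 : (1 : MvPolynomial σ K) ∈ Ideal.span (mono K '' A) := by
        have : mono K (0 : σ →₀ ℕ) ∈ Ideal.span (mono K '' A) := Ideal.subset_span ⟨0, h0, rfl⟩
        simpa [mono] using this
      exact h.ne_top ((Ideal.eq_top_iff_one _).mpr h1)
    refine ⟨h0, fun c hc => ?_⟩
    have hmem : mono K c ∈ Ideal.span (mono K '' A) := Ideal.subset_span ⟨c, hc, rfl⟩
    rw [show (mono K c : MvPolynomial σ K) = ∏ i ∈ c.support, X i ^ c i by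
      rw [mono, monic_monomial_eq]; rfl] at hmem
    obtain ⟨i, hi, hXi⟩ := Ideal.IsPrime.prod_mem_iff.mp hmem
    have hX : (X i : MvPolynomial σ K) ∈ Ideal.span (mono K '' A) :=
      h.mem_of_pow_mem _ hXi
    rw [X_eq_mono, mono_mem_span, exists_le_iff hA] at hX
    exact ⟨i, hi, hX⟩
  · rintro ⟨h0, hvar⟩
    rw [span_eq_spanX hvar]
    exact span_X_isPrime _

end Aux

section Polar

variable {n : ℕ}

lemma polarExp_apply (a : Fin n →₀ ℕ) (i : Fin n) (j : ℕ) :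
    polarExp a (i, j) = if j < a i then 1 else 0 := by
  classical
  rw [polarExp, Finsupp.indicator_apply]
  have hmem : (i, j) ∈ (a.support.biUnion fun i => (Finset.range (a i)).image fun j => (i, j)) ↔
      j < a i := by
    simp only [Finset.mem_biUnion, Finset.mem_image, Finset.mem_range, Finsupp.mem_support_iff,
      Prod.mk.injEq]
    constructor
    · rintro ⟨i', hi', j', hj', rfl, rfl⟩
      exact hj'
    · intro h
      exact ⟨i, by omega, j, h, rfl, rfl⟩
  split_ifs with h1 h2 h2
  · rfl
  · exact absurd (hmem.mp h1) h2
  · exact absurd (hmem.mpr h2) h1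
  · rfl

lemma polar_le_iff (c a : Fin n →₀ ℕ) (d : (Fin n × ℕ) →₀ ℕ) :
    polarExp c ≤ d + polarExp a ↔ ∀ i j, j < c i → j < a i ∨ d (i, j) ≠ 0 := by
  rw [Finsupp.le_def]
  constructor
  · intro h i j hj
    have := h (i, j)
    rw [Finsupp.add_apply, polarExp_apply, polarExp_apply, if_pos hj] at this
    by_cases hja : j < a i
    · exact Or.inl hja
    · right
      rw [if_neg hja] at this
      omega
  · rintro h ⟨i, j⟩
    rw [Finsupp.add_apply, polarExp_apply, polarExp_apply]
    by_cases hj : j < c i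
    · rw [if_pos hj]
      rcases h i j hj with h1 | h1 <;> split_ifs <;> omega
    · rw [if_neg hj]
      exact Nat.zero_le _

lemma polar_le_polar (c a : Fin n →₀ ℕ) : polarExp c ≤ polarExp a ↔ c ≤ a := by
  have h := polar_le_iff c a 0
  rw [zero_add] at h
  rw [h, Finsupp.le_def]
  simp only [Finsupp.coe_zero, Pi.zero_apply, ne_eq, not_true_eq_false, or_false]
  constructor
  · intro h i
    by_contra hlt
    exact absurd (h i (a i) (by omega)) (by omega)
  · intro h i j hj
    exact lt_of_lt_of_le hj (h i)

lemma polar_le_single_add (c a : Fin n →₀ ℕ) (i : Fin n) (j : ℕ) :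
    polarExp c ≤ polarExp a + Finsupp.single (i, j) 1 ↔
      c ≤ a ∨ (j = a i ∧ c ≤ a + Finsupp.single i 1) := by
  rw [add_comm, polar_le_iff]
  have hsingle : ∀ (i' : Fin n) (j' : ℕ),
      (Finsupp.single (i, j) 1 : (Fin n × ℕ) →₀ ℕ) (i', j') ≠ 0 ↔ (i', j') = (i, j) := by
    intro i' j'
    rw [Finsupp.single_apply_ne_zero]
    simp [eq_comm]
  constructor
  · intro h
    by_cases hc : c ≤ a
    · exact Or.inl hc
    · right
      rw [Finsupp.le_def] at hc
      push_neg at hc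
      obtain ⟨i₀, hi₀⟩ := hc
      have h1 := h i₀ (a i₀) (by omega)
      rw [hsingle] at h1
      rcases h1 with h1 | h1
      · omega
      · rw [Prod.mk.injEq] at h1
        obtain ⟨rfl, rfl⟩ := h1
        refine ⟨rfl, Finsupp.le_def.mpr fun i' => ?_⟩
        rw [Finsupp.add_apply, Finsupp.single_apply]
        by_cases hii : i₀ = i'
        · subst hii
          rw [if_pos rfl]
          by_contra hgt
          have h2 := h i₀ (a i₀ + 1) (by omega)
          rw [hsingle, Prod.mk.injEq] at h2
          rcases h2 with h2 | ⟨-, h2⟩ <;> omega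
        · rw [if_neg hii]
          by_contra hgt
          have h2 := h i' (a i') (by omega)
          rw [hsingle, Prod.mk.injEq] at h2
          rcases h2 with h2 | ⟨h2, -⟩
          · omega
          · exact hii h2.symm
  · rintro (hc | ⟨rfl, hc⟩) i' j' hj'
    · exact Or.inl (lt_of_lt_of_le hj' (Finsupp.le_def.mp hc i'))
    · have hle := Finsupp.le_def.mp hc i'
      rw [Finsupp.add_apply, Finsupp.single_apply] at hle
      by_cases hii : i = i'
      · subst hii
        rw [if_pos rfl] at hle
        by_cases hja : j' < a i
        · exact Or.inl hja
        · right
          rw [hsingle, Prod.mk.injEq]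
          exact ⟨rfl, by omega⟩
      · rw [if_neg hii] at hle
        exact Or.inl (by omega)

lemma comb {E : Set (Fin n →₀ ℕ)} (hE : UpClosed E) (a : Fin n →₀ ℕ) :
    (0 ∉ {c : Fin n →₀ ℕ | ∃ b ∈ E, b ≤ a + c} ∧
      ∀ c ∈ {c : Fin n →₀ ℕ | ∃ b ∈ E, b ≤ a + c}, ∃ i ∈ c.support,
        Finsupp.single i 1 ∈ {c : Fin n →₀ ℕ | ∃ b ∈ E, b ≤ a + c}) ↔
    (0 ∉ {d : (Fin n × ℕ) →₀ ℕ | ∃ b ∈ polarExp '' E, b ≤ polarExp a + d} ∧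
      ∀ d ∈ {d : (Fin n × ℕ) →₀ ℕ | ∃ b ∈ polarExp '' E, b ≤ polarExp a + d}, ∃ ij ∈ d.support,
        Finsupp.single ij 1 ∈ {d : (Fin n × ℕ) →₀ ℕ | ∃ b ∈ polarExp '' E, b ≤ polarExp a + d}) := by
  simp only [Set.mem_setOf_eq]
  have e0 : (∃ b ∈ E, b ≤ a + 0) ↔ a ∈ E := by
    rw [add_zero]; exact exists_le_iff hE a
  have e0' : (∃ b ∈ polarExp '' E, b ≤ polarExp a + 0) ↔ a ∈ E := by
    constructor
    · rintro ⟨w, ⟨c, hc, rfl⟩, hle⟩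
      rw [add_zero, polar_le_polar] at hle
      exact hE hc hle
    · intro ha
      exact ⟨polarExp a, ⟨a, ha, rfl⟩, by rw [add_zero]⟩
  constructor
  · rintro ⟨h0, hq⟩
    refine ⟨fun h => h0 (e0.mpr (e0'.mp h)), ?_⟩
    rintro d ⟨w, ⟨c, hcE, rfl⟩, hw⟩
    have hce : c ≤ a + (c - a) := le_add_tsub
    obtain ⟨i, hi, hsi⟩ := hq (c - a) ⟨c, hcE, hce⟩
    have hia : a i < c i := by
      have := Finsupp.mem_support_iff.mp hi
      rw [Finsupp.tsub_apply] at this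
      omega
    have hd : d (i, a i) ≠ 0 := by
      rw [add_comm (polarExp a) d] at hw
      rcases (polar_le_iff c a d).mp hw i (a i) hia with h | h
      · omega
      · exact h
    refine ⟨(i, a i), Finsupp.mem_support_iff.mpr hd, ?_⟩
    obtain ⟨b, hbE, hble⟩ := hsi
    refine ⟨polarExp (a + Finsupp.single i 1), ⟨a + Finsupp.single i 1, hE hbE hble, rfl⟩, ?_⟩
    exact (polar_le_single_add _ _ _ _).mpr (Or.inr ⟨rfl, le_rfl⟩)
  · rintro ⟨h0, hq⟩
    have ha : a ∉ E := fun h => h0 (e0'.mpr h)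
    refine ⟨fun h => h0 (e0'.mpr (e0.mp h)), ?_⟩
    rintro c ⟨b, hbE, hble⟩
    have hacE : a + c ∈ E := hE hbE hble
    obtain ⟨⟨i, j⟩, hij, w, ⟨c', hc'E, rfl⟩, hw⟩ :=
      hq (polarExp (a + c)) ⟨polarExp (a + c), ⟨a + c, hacE, rfl⟩, le_add_self⟩
    rcases (polar_le_single_add _ _ _ _).mp hw with h | ⟨rfl, hle⟩
    · exact absurd (hE hc'E h) ha
    · have hci : c i ≠ 0 := by
        have h2 := Finsupp.mem_support_iff.mp hij
        rw [polarExp_apply] at h2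
        have h3 : a i < (a + c) i := by
          by_contra h4
          rw [if_neg h4] at h2
          exact h2 rfl
        rw [Finsupp.add_apply] at h3
        omega
      exact ⟨i, Finsupp.mem_support_iff.mpr hci, c', hc'E, hle⟩

end Polar

/-- `I : u` is a prime ideal of `S` if and only if
`I^p : u^p` is a prime ideal of `T`; in this case `I : u = π(I^p : u^p)`,
where `π : T → S`, `x_{ij} ↦ x_i`, is the specialization map. -/
theorem colon_prime_iff_polarization_colon_prime
    {K : Type*} [Field K] {n : ℕ} (I : Ideal (MvPolynomial (Fin n) K))
    (hI : IsMonomialIdeal I) (a : Fin n →₀ ℕ) :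
    ((I.colon (Ideal.span {mono K a})).IsPrime ↔
      ((polarIdeal I).colon (Ideal.span {mono K (polarExp a)})).IsPrime) ∧
    ((I.colon (Ideal.span {mono K a})).IsPrime →
      I.colon (Ideal.span {mono K a}) =
        Ideal.map (rename (Prod.fst : Fin n × ℕ → Fin n) : MvPolynomial (Fin n × ℕ) K →ₐ[K] MvPolynomial (Fin n) K)
          ((polarIdeal I).colon (Ideal.span {mono K (polarExp a)}))) := by
  obtain ⟨A, hAdef⟩ := hI
  set E : Set (Fin n →₀ ℕ) := {c | mono K c ∈ I} with hEdef
  have hEup : UpClosed E := by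
    intro c c' hc hle
    have h : mono K c' = mono K (c' - c) * mono K c := by
      rw [mono_mul, tsub_add_cancel_of_le hle]
    show mono K c' ∈ I
    rw [h]
    exact I.mul_mem_left _ hc
  have hIE : I = Ideal.span (mono K '' E) := by
    apply le_antisymm
    · conv_lhs => rw [hAdef]
      rw [Ideal.span_le]
      rintro _ ⟨b, hb, rfl⟩
      refine Ideal.subset_span ⟨b, ?_, rfl⟩
      show mono K b ∈ I
      rw [hAdef]
      exact Ideal.subset_span ⟨b, hb, rfl⟩
    · rw [Ideal.span_le]
      rintro _ ⟨c, hc, rfl⟩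
      exact hc
  have hpolar : polarIdeal I = Ideal.span (mono K '' (polarExp '' E)) := by
    rw [polarIdeal, Set.image_image]
  have hS₁up : UpClosed {c : Fin n →₀ ℕ | ∃ b ∈ E, b ≤ a + c} := by
    rintro c c' ⟨b, hb, hble⟩ h
    exact ⟨b, hb, hble.trans (add_le_add_right h a)⟩
  have hS₂up : UpClosed {d : (Fin n × ℕ) →₀ ℕ | ∃ b ∈ polarExp '' E, b ≤ polarExp a + d} := by
    rintro c c' ⟨b, hb, hble⟩ h
    exact ⟨b, hb, hble.trans (add_le_add_right h _)⟩
  have hJ : I.colon (Ideal.span {mono K a}) =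
      Ideal.span (mono K '' {c | ∃ b ∈ E, b ≤ a + c}) := by
    conv_lhs => rw [hIE]
    rw [colon_span]
  have hJp : (polarIdeal I).colon (Ideal.span {mono K (polarExp a)}) =
      Ideal.span (mono K '' {d | ∃ b ∈ polarExp '' E, b ≤ polarExp a + d}) := by
    conv_lhs => rw [hpolar]
    rw [colon_span]
  have hiff : (I.colon (Ideal.span {mono K a})).IsPrime ↔
      ((polarIdeal I).colon (Ideal.span {mono K (polarExp a)})).IsPrime := by
    rw [hJ, hJp, prime_iff hS₁up, prime_iff hS₂up]
    exact comb hEup a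
  refine ⟨hiff, fun hpr => ?_⟩
  have hp1 := hpr
  rw [hJ, prime_iff hS₁up] at hp1
  have hp2 := hiff.mp hpr
  rw [hJp, prime_iff hS₂up] at hp2
  have haE : a ∉ E := fun h => hp1.1 ⟨a, h, by rw [add_zero]⟩
  rw [hJ, hJp, span_eq_spanX hp1.2, span_eq_spanX hp2.2, Ideal.map_span]
  congr 1
  rw [Set.image_image]
  simp only [rename_X]
  have hset : (Prod.fst '' {ij : Fin n × ℕ |
        Finsupp.single ij 1 ∈ {d : (Fin n × ℕ) →₀ ℕ | ∃ b ∈ polarExp '' E, b ≤ polarExp a + d}})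
      = {i : Fin n | Finsupp.single i 1 ∈ {c : Fin n →₀ ℕ | ∃ b ∈ E, b ≤ a + c}} := by
    ext i
    constructor
    · rintro ⟨⟨i', j⟩, hm, rfl⟩
      obtain ⟨w, ⟨c, hcE, rfl⟩, hw⟩ := hm
      rcases (polar_le_single_add _ _ _ _).mp hw with h | ⟨hj, hle⟩
      · exact absurd (hEup hcE h) haE
      · exact ⟨c, hcE, hle⟩
    · rintro ⟨b, hb, hble⟩
      refine ⟨(i, a i), ?_, rfl⟩
      refine ⟨polarExp (a + Finsupp.single i 1), ⟨a + Finsupp.single i 1, hEup hb hble, rfl⟩, ?_⟩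
      exact (polar_le_single_add _ _ _ _).mpr (Or.inr ⟨rfl, le_rfl⟩)
  rw [← hset, ← Set.image_image (fun i => (X i : MvPolynomial (Fin n) K)) Prod.fst]
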